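/- arXiv:2110.02292 — 2 statements merged into one kernel-verified Lean document; each statement's English description precedes it below -/
import Mathlib

section
/- Let f be an unbounded modulus function such that the limit lim_{n → ∞} f(n)/f(2n) exists. Then the statistical ideal 𝔍_s equals the f-ideal 𝔍_f if and only if lim_{n → ∞} f(n)/f(2n) < 1. -/
open Filter Set Topology

/-- `f : ℝ → ℝ` (viewed on `ℝ⁺`) is an unbounded modulus function. -/
def IsModulus (f : ℝ → ℝ) : Prop :=
  (∀ x : ℝ, 0 ≤ x → 0 ≤ f x) ∧
  (∀ x : ℝ, 0 ≤ x → (f x = 0 ↔ x = 0)) ∧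
  (∀ x y : ℝ, 0 ≤ x → 0 ≤ y → f (x + y) ≤ f x + f y) ∧
  (∀ x y : ℝ, 0 ≤ x → x ≤ y → f x ≤ f y) ∧
  ContinuousWithinAt f (Set.Ici 0) 0 ∧
  Tendsto (fun n : ℕ => f n) atTop atTop

/-- `α_A(n) = |A ∩ [1,n]|`. -/
noncomputable def alphaCount (A : Set ℕ) (n : ℕ) : ℕ := (A ∩ Set.Icc 1 n).ncard

/-- The statistical ideal: sets of natural density zero. -/
def statIdeal : Set (Set ℕ) :=
  {A | Tendsto (fun n : ℕ => (alphaCount A n : ℝ) / n) atTop (nhds 0)}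

/-- The `f`-ideal: sets of `f`-density zero. -/
def fIdeal (f : ℝ → ℝ) : Set (Set ℕ) :=
  {A | Tendsto (fun n : ℕ => f (alphaCount A n) / f n) atTop (nhds 0)}

/-- `g_f(k) = limsup_n f(n)/f(2^k n)`. -/
noncomputable def gmod (f : ℝ → ℝ) (k : ℕ) : ℝ :=
  Filter.limsup (fun n : ℕ => f n / f (2 ^ k * n)) atTop

/-- `h_f(t) = limsup_n f(n)/f(t n)` for real `t`. -/
noncomputable def hmod (f : ℝ → ℝ) (t : ℝ) : ℝ :=
  Filter.limsup (fun n : ℕ => f n / f (t * n)) atTop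

section Helpers

variable {f : ℝ → ℝ}


lemma ncard_Icc_nat (a b : ℕ) : (Set.Icc a b).ncard = b + 1 - a := by
  rw [Set.ncard_eq_toFinset_card']; simp [Nat.card_Icc]

lemma mod_f0 (hf : IsModulus f) : f 0 = 0 := (hf.2.1 0 le_rfl).2 rfl

lemma mod_pos (hf : IsModulus f) {x : ℝ} (hx : 0 < x) : 0 < f x := by
  rcases (hf.1 x hx.le).lt_or_eq with h | h
  · exact h
  · exact absurd ((hf.2.1 x hx.le).1 h.symm) hx.ne'

lemma mod_mono (hf : IsModulus f) {x y : ℝ} (hx : 0 ≤ x) (hxy : x ≤ y) : f x ≤ f y :=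
  hf.2.2.2.1 x y hx hxy

lemma mod_mono_nat (hf : IsModulus f) {m n : ℕ} (h : m ≤ n) : f m ≤ f n :=
  mod_mono hf (by positivity) (by exact_mod_cast h)

lemma mod_pos_nat (hf : IsModulus f) {n : ℕ} (h : 1 ≤ n) : 0 < f n := by
  have : (0:ℝ) < n := by exact_mod_cast h
  exact mod_pos hf this

lemma mod_nat_mul (hf : IsModulus f) (k : ℕ) {x : ℝ} (hx : 0 ≤ x) :
    f (k * x) ≤ k * f x := by
  induction k with
  | zero => simp [mod_f0 hf]
  | succ k ih =>
    have e : ((k:ℝ)+1) * x = k * x + x := by ring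
    push_cast
    rw [e]
    calc f ((k:ℝ)*x + x) ≤ f ((k:ℝ)*x) + f x := hf.2.2.1 _ _ (by positivity) hx
    _ ≤ k * f x + f x := by linarith
    _ = ((k:ℝ)+1) * f x := by ring

lemma mod_ratio_pow (hf : IsModulus f) {a : ℝ}
    (h : Tendsto (fun n : ℕ => f n / f (2 * n)) atTop (nhds a)) (k : ℕ) :
    Tendsto (fun n : ℕ => f n / f (2 ^ k * n)) atTop (nhds (a ^ k)) := by
  induction k with
  | zero =>
    rw [pow_zero]
    apply Tendsto.congr' _ tendsto_const_nhds
    filter_upwards [eventually_ge_atTop 1] with n hn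
    rw [pow_zero, one_mul, div_self (mod_pos_nat hf hn).ne']
  | succ k ih =>
    have hg : Tendsto (fun n : ℕ => 2 ^ k * n) atTop atTop :=
      tendsto_atTop_mono (fun n => Nat.le_mul_of_pos_left n (Nat.pow_pos (n := k) two_pos)) tendsto_id
    have h2 : Tendsto (fun n : ℕ => f (2 ^ k * (n:ℝ)) / f (2 ^ (k+1) * (n:ℝ))) atTop (nhds a) := by
      have := h.comp hg
      apply this.congr
      intro n
      simp only [Function.comp]
      push_cast
      ring_nf
    have := ih.mul h2
    rw [← pow_succ] at this
    apply Tendsto.congr' _ this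
    filter_upwards [eventually_ge_atTop 1] with n hn
    have hne : f (2 ^ k * (n:ℝ)) ≠ 0 := by
      have : (0:ℝ) < 2 ^ k * n := by positivity
      exact (mod_pos hf this).ne'
    field_simp

lemma mod_a_nonneg (hf : IsModulus f) {a : ℝ}
    (h : Tendsto (fun n : ℕ => f n / f (2 * n)) atTop (nhds a)) : 0 ≤ a :=
  ge_of_tendsto' h fun n => div_nonneg (hf.1 _ n.cast_nonneg) (hf.1 _ (by positivity))

lemma mod_a_le_one (hf : IsModulus f) {a : ℝ}
    (h : Tendsto (fun n : ℕ => f n / f (2 * n)) atTop (nhds a)) : a ≤ 1 := by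
  apply le_of_tendsto h
  filter_upwards [eventually_ge_atTop 1] with n hn
  have h1 : (0:ℝ) < n := by exact_mod_cast hn
  rw [div_le_one (mod_pos hf (by linarith))]
  exact mod_mono hf h1.le (by linarith)

lemma fIdeal_subset_statIdeal (hf : IsModulus f) : fIdeal f ⊆ statIdeal := by
  intro A hA
  rw [statIdeal, Set.mem_setOf_eq, NormedAddCommGroup.tendsto_nhds_zero]
  intro ε hε
  obtain ⟨k, hk⟩ := exists_pow_lt_of_lt_one hε (by norm_num : (1:ℝ)/2 < 1)
  have hA' := (NormedAddCommGroup.tendsto_nhds_zero.mp hA) ((1:ℝ)/2^k) (by positivity)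
  filter_upwards [hA', eventually_ge_atTop 1] with n hn h1
  have hfa : 0 ≤ f (alphaCount A n) := hf.1 _ (Nat.cast_nonneg _)
  have hfn : 0 < f n := mod_pos_nat hf h1
  have hnR : (0:ℝ) < n := by exact_mod_cast h1
  have key : 2 ^ k * alphaCount A n < n := by
    by_contra hc
    push_neg at hc
    have hcc : (n:ℝ) ≤ (2^k : ℕ) * (alphaCount A n : ℝ) := by exact_mod_cast hc
    have h2 : f n ≤ f ((2^k : ℕ) * (alphaCount A n : ℝ)) :=
      mod_mono hf hnR.le hcc
    have h3 : f ((2^k:ℕ) * (alphaCount A n : ℝ)) ≤ (2^k:ℕ) * f (alphaCount A n) :=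
      mod_nat_mul hf _ (Nat.cast_nonneg _)
    have h4 : (1:ℝ)/2^k ≤ f (alphaCount A n) / f n := by
      rw [div_le_div_iff₀ (by positivity) hfn]
      push_cast at h2 h3
      nlinarith [h2, h3]
    rw [Real.norm_eq_abs, abs_of_nonneg (div_nonneg hfa hfn.le)] at hn
    linarith
  rw [Real.norm_eq_abs, abs_of_nonneg (by positivity)]
  have keyR : (alphaCount A n : ℝ) * 2^k < n := by
    have : ((2^k * alphaCount A n : ℕ) : ℝ) < n := by exact_mod_cast key
    push_cast at this; linarith
  calc (alphaCount A n : ℝ) / n < 1 / 2^k := by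
        rw [div_lt_div_iff₀ hnR (by positivity)]; linarith
  _ = (1/2:ℝ)^k := by rw [div_pow, one_pow]
  _ < ε := hk

lemma statIdeal_subset_fIdeal (hf : IsModulus f) {a : ℝ}
    (h : Tendsto (fun n : ℕ => f n / f (2 * n)) atTop (nhds a)) (ha : a < 1) :
    statIdeal ⊆ fIdeal f := by
  have ha0 : 0 ≤ a := mod_a_nonneg hf h
  intro A hA
  rw [fIdeal, Set.mem_setOf_eq, NormedAddCommGroup.tendsto_nhds_zero]
  intro ε hε
  obtain ⟨k, hk⟩ := exists_pow_lt_of_lt_one hε ha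
  obtain ⟨M, hM⟩ := eventually_atTop.mp ((mod_ratio_pow hf h k).eventually_lt_const hk)
  have hA' := (NormedAddCommGroup.tendsto_nhds_zero.mp hA) ((1:ℝ)/2^k) (by positivity)
  filter_upwards [hA', eventually_ge_atTop (2^k * (M+1))] with n hn hnN
  have h1n : 1 ≤ n := le_trans (Nat.one_le_iff_ne_zero.mpr (by positivity)) hnN
  have hnR : (0:ℝ) < n := by exact_mod_cast h1n
  set α := alphaCount A n with hα
  set m := n / 2^k with hm
  have hp : 0 < 2^k := Nat.pow_pos (n := k) two_pos
  have hmM : M + 1 ≤ m := (Nat.le_div_iff_mul_le hp).mpr (by rw [mul_comm]; exact hnN)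
  have hm1 : 1 ≤ m := le_trans (by omega) hmM
  have hαm : α ≤ m := by
    rw [Real.norm_eq_abs, abs_of_nonneg (by positivity)] at hn
    have : (α:ℝ) * 2^k < n := by
      rw [div_lt_div_iff₀ hnR (by positivity : (0:ℝ) < 2^k)] at hn
      linarith
    have hnat : α * 2^k ≤ n := by exact_mod_cast this.le
    exact (Nat.le_div_iff_mul_le hp).mpr hnat
  have e2 : (2^k * m : ℕ) ≤ n := by rw [mul_comm]; exact Nat.div_mul_le_self n (2^k)
  have hd : 0 < f ((2^k * m : ℕ)) := mod_pos_nat hf (Nat.one_le_iff_ne_zero.mpr (Nat.mul_ne_zero (by positivity) (by omega)))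
  have chain : f α / f n ≤ f m / f ((2^k * m : ℕ) : ℕ) :=
    div_le_div₀ (hf.1 _ (Nat.cast_nonneg _)) (mod_mono_nat hf hαm) hd (mod_mono_nat hf e2)
  have last : f m / f ((2^k * m : ℕ)) < ε := by
    have := hM m (by omega)
    have ecast : ((2^k * m : ℕ) : ℝ) = 2^k * (m:ℝ) := by push_cast; ring
    rwa [ecast]
  have hfn : 0 < f n := mod_pos_nat hf h1n
  rw [Real.norm_eq_abs, abs_of_nonneg (div_nonneg (hf.1 _ (Nat.cast_nonneg _)) hfn.le)]
  linarith

lemma exists_mem_statIdeal_not_fIdeal (hf : IsModulus f) {a : ℝ}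
    (h : Tendsto (fun n : ℕ => f n / f (2 * n)) atTop (nhds a)) (ha : 1 ≤ a) :
    ∃ A : Set ℕ, A ∈ statIdeal ∧ A ∉ fIdeal f := by
  have ha1 : a = 1 := le_antisymm (mod_a_le_one hf h) ha
  subst ha1
  have hMex : ∀ k : ℕ, ∃ M : ℕ, ∀ m' ≥ M, 1/2 < f m' / f (2^k * m') := by
    intro k
    have h1 := mod_ratio_pow hf h k
    rw [one_pow] at h1
    exact eventually_atTop.mp (h1.eventually_const_lt (by norm_num : (1:ℝ)/2 < 1))
  choose M hMs using hMex
  set m : ℕ → ℕ := fun k => Nat.rec (max (M 0) 1) (fun k mk => max (M (k+1)) (2 * mk + 1)) k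
    with hmdef
  have hmsucc : ∀ k, m (k+1) = max (M (k+1)) (2 * m k + 1) := fun k => rfl
  have hm1 : ∀ k, 1 ≤ m k := by
    intro k
    cases k with
    | zero => exact le_max_right _ _
    | succ k => rw [hmsucc]; omega
  have hmM : ∀ k, M k ≤ m k := by
    intro k
    cases k with
    | zero => exact le_max_left _ _
    | succ k => rw [hmsucc]; exact le_max_left _ _
  have hm2 : ∀ k, 2 * m k + 1 ≤ m (k+1) := by
    intro k; rw [hmsucc]; exact le_max_right _ _
  set N : ℕ → ℕ := fun k => 2^k * m k with hNdef
  have hp : ∀ k : ℕ, (1:ℕ) ≤ 2^k := fun k => Nat.one_le_two_pow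
  have hmN : ∀ k, m k ≤ N k := fun k => Nat.le_mul_of_pos_left _ (hp k)
  have hN1 : ∀ k, 1 ≤ N k := fun k => le_trans (hm1 k) (hmN k)
  have hNlt : ∀ k, k < N k :=
    fun k => lt_of_lt_of_le (Nat.lt_two_pow_self (n := k)) (Nat.le_mul_of_pos_right _ (hm1 k))
  set D : ℕ → ℕ := fun k => N k - m k with hDdef
  have hDm : ∀ k, D k + m k = N k := fun k => Nat.sub_add_cancel (hmN k)
  have hD : ∀ k, 2^k * m (k+1) ≤ D (k+1) := by
    intro k
    have e : N (k+1) = 2 * (2^k * m (k+1)) := by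
      show 2^(k+1) * m (k+1) = _
      rw [pow_succ]; ring
    have h2 : m (k+1) ≤ 2^k * m (k+1) := Nat.le_mul_of_pos_left _ (hp k)
    have := hDm (k+1)
    omega
  have hDN : ∀ k, N k ≤ D (k+1) := by
    intro k
    calc N k = 2^k * m k := rfl
    _ ≤ 2^k * m (k+1) := Nat.mul_le_mul_left _ (by have := hm2 k; omega)
    _ ≤ D (k+1) := hD k
  have hDmono : Monotone D := by
    apply monotone_nat_of_le_succ
    intro k
    calc D k ≤ N k := Nat.sub_le _ _
    _ ≤ D (k+1) := hDN k
  set A : Set ℕ := {x | ∃ k, x ∈ Set.Icc (D k + 1) (N k)} with hAdef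
  set U : ℕ → Set ℕ := fun k => ⋃ j ∈ Finset.range (k+1), Set.Icc (D j + 1) (N j) with hUdef
  have hJcard : ∀ k, (Set.Icc (D k + 1) (N k)).ncard = m k := by
    intro k
    rw [_root_.ncard_Icc_nat]
    have := hDm k
    omega
  have hUfin : ∀ k, (U k).Finite := by
    intro k
    apply Set.Finite.biUnion (Finset.finite_toSet _)
    intro j _
    exact Set.finite_Icc _ _
  have hUcard : ∀ k, (U k).ncard ≤ 2 * m k := by
    intro k
    induction k with
    | zero =>
      have e : U 0 = Set.Icc (D 0 + 1) (N 0) := by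
        rw [hUdef]; simp
      rw [e, hJcard]; omega
    | succ k ih =>
      have e : U (k+1) = Set.Icc (D (k+1) + 1) (N (k+1)) ∪ U k := by
        show (⋃ j ∈ Finset.range (k+1+1), Set.Icc (D j + 1) (N j)) = _
        rw [Finset.range_add_one, Finset.set_biUnion_insert]
      rw [e]
      calc (Set.Icc (D (k+1) + 1) (N (k+1)) ∪ U k).ncard
          ≤ (Set.Icc (D (k+1) + 1) (N (k+1))).ncard + (U k).ncard := Set.ncard_union_le _ _
      _ ≤ m (k+1) + 2 * m k := by rw [hJcard]; omega
      _ ≤ 2 * m (k+1) := by have := hm2 k; omega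
  -- upper bound for alphaCount
  have hupper : ∀ k n, n < N (k+1) → alphaCount A n ≤ 2 * m k + (n - D (k+1)) := by
    intro k n hn
    have hsub : A ∩ Set.Icc 1 n ⊆ U k ∪ Set.Icc (D (k+1) + 1) n := by
      rintro x ⟨⟨j, hxj⟩, hx1, hxn⟩
      by_cases hj : j ≤ k
      · left
        exact Set.mem_iUnion₂.mpr ⟨j, Finset.mem_range.mpr (by omega), hxj⟩
      · right
        push_neg at hj
        refine ⟨le_trans ?_ hxj.1, hxn⟩
        have := hDmono (show k+1 ≤ j by omega)
        omega
    calc alphaCount A n ≤ (U k ∪ Set.Icc (D (k+1) + 1) n).ncard :=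
          Set.ncard_le_ncard hsub ((hUfin k).union (Set.finite_Icc _ _))
    _ ≤ (U k).ncard + (Set.Icc (D (k+1) + 1) n).ncard := Set.ncard_union_le _ _
    _ ≤ 2 * m k + (n - D (k+1)) := by
        rw [_root_.ncard_Icc_nat]
        have := hUcard k
        omega
  -- lower bound
  have hlower : ∀ k, m k ≤ alphaCount A (N k) := by
    intro k
    have hsub : Set.Icc (D k + 1) (N k) ⊆ A ∩ Set.Icc 1 (N k) := by
      rintro x ⟨hx1, hx2⟩
      exact ⟨⟨k, hx1, hx2⟩, by omega, hx2⟩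
    calc m k = (Set.Icc (D k + 1) (N k)).ncard := (hJcard k).symm
    _ ≤ (A ∩ Set.Icc 1 (N k)).ncard :=
        Set.ncard_le_ncard hsub ((Set.finite_Icc 1 (N k)).subset Set.inter_subset_right)
  refine ⟨A, ?_, ?_⟩
  · -- statIdeal
    rw [statIdeal, Set.mem_setOf_eq, NormedAddCommGroup.tendsto_nhds_zero]
    intro ε hε
    obtain ⟨k, hk⟩ := exists_pow_lt_of_lt_one (by positivity : (0:ℝ) < ε/3)
      (by norm_num : (1:ℝ)/2 < 1)
    filter_upwards [eventually_ge_atTop (N k)] with n hn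
    have hkn : k ≤ n := le_trans (hNlt k).le hn
    set j := Nat.findGreatest (fun i => N i ≤ n) n with hjdef
    have hj1 : N j ≤ n := Nat.findGreatest_spec (P := fun i => N i ≤ n) hkn hn
    have hkj : k ≤ j := Nat.le_findGreatest (P := fun i => N i ≤ n) hkn hn
    have hj2 : n < N (j+1) := by
      by_contra hc
      push_neg at hc
      have h5 : j + 1 ≤ n := le_trans (hNlt (j+1)).le hc
      have := Nat.le_findGreatest (P := fun i => N i ≤ n) h5 hc
      omega
    have hn1 : 1 ≤ n := le_trans (hN1 j) hj1
    have hnR : (0:ℝ) < n := by exact_mod_cast hn1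
    have hNjR : (0:ℝ) < (N j : ℝ) := by exact_mod_cast hN1 j
    have hjR : (0:ℝ) < (2:ℝ)^j * (m j : ℝ) := by
      have : ((N j : ℕ) : ℝ) = (2:ℝ)^j * (m j : ℝ) := by
        show ((2^j * m j : ℕ) : ℝ) = _
        push_cast; ring
      rw [← this]; exact hNjR
    have hNjcast : ((N j : ℕ) : ℝ) = (2:ℝ)^j * (m j : ℝ) := by
      show ((2^j * m j : ℕ) : ℝ) = _
      push_cast; ring
    have key : (alphaCount A n : ℝ) / n ≤ 3 / 2^j := by
      rcases le_or_gt n (D (j+1)) with hc | hc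
      · have hα : alphaCount A n ≤ 2 * m j := by
          have := hupper j n hj2
          omega
        calc (alphaCount A n : ℝ) / n ≤ (2 * m j : ℝ) / (N j : ℝ) := by
              apply div_le_div₀ (by positivity) (by exact_mod_cast hα) hNjR (by exact_mod_cast hj1)
        _ = 2 / 2^j := by
              rw [hNjcast]
              rw [div_eq_div_iff (by positivity) (by positivity)]
              push_cast; ring
        _ ≤ 3 / 2^j := by gcongr <;> norm_num
      · have hα : (alphaCount A n : ℝ) ≤ 2 * m j + m (j+1) := by
          have h1 := hupper j n hj2
          have h2 : n - D (j+1) ≤ m (j+1) := by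
            have := hDm (j+1)
            omega
          have : alphaCount A n ≤ 2 * m j + m (j+1) := by omega
          exact_mod_cast this
        have hn2 : (2:ℝ)^j * (m (j+1) : ℝ) ≤ n := by
          have hnat : 2^j * m (j+1) ≤ n := le_trans (hD j) hc.le
          have := (Nat.cast_le (α := ℝ)).mpr hnat
          push_cast at this
          linarith
        have hmj1R : (0:ℝ) < (m (j+1) : ℝ) := by exact_mod_cast hm1 (j+1)
        have hmjR : (0:ℝ) < (m j : ℝ) := by exact_mod_cast hm1 j
        calc (alphaCount A n : ℝ) / n ≤ ((2 * m j : ℝ) + m (j+1)) / n := by gcongr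
        _ = (2 * m j : ℝ)/n + (m (j+1) : ℝ)/n := add_div _ _ _
        _ ≤ (2 * m j : ℝ)/((2:ℝ)^j * m j) + (m (j+1) : ℝ)/((2:ℝ)^j * m (j+1)) := by
            apply add_le_add
            · apply div_le_div_of_nonneg_left (by positivity) (by positivity)
              rw [← hNjcast]; exact_mod_cast hj1
            · exact div_le_div_of_nonneg_left (by positivity) (by positivity) hn2
        _ = 2 / 2^j + 1 / 2^j := by
            have e1 : (2 * m j : ℝ)/((2:ℝ)^j * m j) = 2/2^j := by
              rw [div_eq_div_iff (by positivity) (by positivity)]; ring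
            have e2 : (m (j+1) : ℝ)/((2:ℝ)^j * m (j+1)) = 1/2^j := by
              rw [div_eq_div_iff (by positivity) (by positivity)]; ring
            rw [e1, e2]
        _ = 3 / 2^j := by ring
    have hmono : (3:ℝ) / 2^j ≤ 3 / 2^k := by gcongr <;> norm_num
    rw [Real.norm_eq_abs, abs_of_nonneg (by positivity)]
    have : (3:ℝ)/2^k < ε := by
      have : (3:ℝ)/2^k = 3 * (1/2)^k := by rw [div_pow, one_pow]; ring
      rw [this]; linarith
    linarith
  · -- not in fIdeal
    intro hA
    rw [fIdeal, Set.mem_setOf_eq] at hA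
    have hev := hA.eventually_lt_const (show (0:ℝ) < 1/2 by norm_num)
    have hNt : Tendsto N atTop atTop :=
      tendsto_atTop_mono (fun k => (hNlt k).le) tendsto_id
    obtain ⟨k, hk⟩ := eventually_atTop.mp (hNt.eventually hev)
    have hcontra := hk k le_rfl
    -- hcontra : f (α (N k)) / f (N k) < 1/2
    have h1 : 1/2 < f (m k) / f (2^k * (m k : ℝ)) := hMs k (m k) (hmM k)
    have hcast : ((N k : ℕ) : ℝ) = (2:ℝ)^k * (m k : ℝ) := by
      show ((2^k * m k : ℕ) : ℝ) = _
      push_cast; ring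
    have h2 : f (m k) ≤ f (alphaCount A (N k)) := mod_mono_nat hf (hlower k)
    have h3 : 0 < f (N k) := mod_pos_nat hf (hN1 k)
    have h4 : f (m k) / f (N k) ≤ f (alphaCount A (N k)) / f (N k) := by gcongr
    rw [hcast] at h3 h4 hcontra
    linarith

end Helpers

theorem statIdeal_eq_fIdeal_iff_lt_one (f : ℝ → ℝ) (hf : IsModulus f) (a : ℝ)
    (h : Tendsto (fun n : ℕ => f n / f (2 * n)) atTop (nhds a)) :
    statIdeal = fIdeal f ↔ a < 1 := by
  constructor
  · intro heq
    by_contra hc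
    push_neg at hc
    obtain ⟨A, hA1, hA2⟩ := exists_mem_statIdeal_not_fIdeal hf h hc
    exact hA2 (heq ▸ hA1)
  · intro ha
    exact Set.Subset.antisymm (statIdeal_subset_fIdeal hf h ha) (fIdeal_subset_statIdeal hf)
end

section
/- There exists an unbounded modulus function f such that the sequence n ↦ f(n)/f(2n) does not converge (indeed f(2^n)/f(2^{n+1}) equals 1 for odd n and 1/2 for even n), while nevertheless the f-ideal 𝔍_f equals the statistical ideal 𝔍_s. -/
open Filter Set Topology

noncomputable def Fmod (x : ℝ) : ℝ := ⨆ k : ℕ, min (x / 2 ^ k) (2 ^ (k + 1))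

lemma Fmod_bdd (x : ℝ) : BddAbove (Set.range fun k : ℕ => min (x / 2 ^ k) ((2:ℝ) ^ (k + 1))) := by
  refine ⟨max x 0, ?_⟩
  rintro y ⟨k, rfl⟩
  have h2k : (1:ℝ) ≤ 2 ^ k := one_le_pow₀ (by norm_num)
  rcases le_or_gt 0 x with hx | hx
  · exact le_trans (min_le_left _ _) (le_trans (div_le_self hx h2k) (le_max_left _ _))
  · refine le_trans (min_le_left _ _) (le_trans ?_ (le_max_right _ _))
    exact div_nonpos_of_nonpos_of_nonneg hx.le (by positivity)

lemma Fmod_term_le (x : ℝ) (k : ℕ) : min (x / 2 ^ k) ((2:ℝ) ^ (k + 1)) ≤ Fmod x :=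
  le_ciSup (Fmod_bdd x) k

lemma Fmod_le (x : ℝ) {c : ℝ} (h : ∀ k : ℕ, min (x / 2 ^ k) ((2:ℝ) ^ (k + 1)) ≤ c) : Fmod x ≤ c :=
  ciSup_le h

lemma Fmod_nonneg {x : ℝ} (hx : 0 ≤ x) : 0 ≤ Fmod x :=
  le_trans (le_min (by positivity) (by positivity)) (Fmod_term_le x 0)

lemma Fmod_le_self {x : ℝ} (hx : 0 ≤ x) : Fmod x ≤ x := by
  refine Fmod_le x fun k => le_trans (min_le_left _ _) ?_
  exact div_le_self hx (one_le_pow₀ (by norm_num))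

lemma Fmod_zero : Fmod 0 = 0 :=
  le_antisymm (Fmod_le_self le_rfl) (Fmod_nonneg le_rfl)

lemma Fmod_pos {x : ℝ} (hx : 0 < x) : 0 < Fmod x := by
  have h : (0:ℝ) < min (x / 2 ^ 0) (2 ^ (0 + 1)) := by
    simp only [pow_zero, div_one]
    exact lt_min hx (by norm_num)
  exact lt_of_lt_of_le h (Fmod_term_le x 0)

lemma Fmod_mono {x y : ℝ} (h : x ≤ y) : Fmod x ≤ Fmod y := by
  refine Fmod_le x fun k => le_trans ?_ (Fmod_term_le y k)
  exact min_le_min (by gcongr) le_rfl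

lemma Fmod_subadd {x y : ℝ} (hx : 0 ≤ x) (hy : 0 ≤ y) :
    Fmod (x + y) ≤ Fmod x + Fmod y := by
  refine Fmod_le _ fun k => ?_
  have key : min ((x + y) / 2 ^ k) ((2:ℝ) ^ (k + 1)) ≤
      min (x / 2 ^ k) ((2:ℝ) ^ (k + 1)) + min (y / 2 ^ k) ((2:ℝ) ^ (k + 1)) := by
    have h2k : (0:ℝ) < 2 ^ k := by positivity
    have hxx : (0:ℝ) ≤ x / 2 ^ k := by positivity
    have hyy : (0:ℝ) ≤ y / 2 ^ k := by positivity
    have hc : (0:ℝ) < 2 ^ (k+1) := by positivity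
    have hsum : (x + y) / 2 ^ k = x / 2 ^ k + y / 2 ^ k := add_div x y _
    rw [hsum]
    rcases le_total ((2:ℝ)^(k+1)) (x / 2^k) with h1 | h1
    · rw [min_eq_right h1]
      have hb0 : 0 ≤ min (y/2^k) ((2:ℝ)^(k+1)) := le_min hyy hc.le
      exact le_trans (min_le_right _ _) (by linarith)
    · rcases le_total ((2:ℝ)^(k+1)) (y / 2^k) with h2 | h2
      · rw [min_eq_left h1, min_eq_right h2]
        exact le_trans (min_le_right _ _) (by linarith)
      · rw [min_eq_left h1, min_eq_left h2]
        exact min_le_left _ _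
  exact le_trans key (add_le_add (Fmod_term_le x k) (Fmod_term_le y k))

lemma Fmod_le_sqrt {x : ℝ} (hx : 0 ≤ x) : Fmod x ≤ Real.sqrt 2 * Real.sqrt x := by
  refine Fmod_le _ fun k => ?_
  have h1 : (0:ℝ) ≤ x / 2 ^ k := by positivity
  have h2 : (0:ℝ) ≤ (2:ℝ) ^ (k+1) := by positivity
  have hmin : (0:ℝ) ≤ min (x / 2^k) ((2:ℝ)^(k+1)) := le_min h1 h2
  have hprod : (x / 2 ^ k) * (2:ℝ) ^ (k + 1) = 2 * x := by
    rw [pow_succ]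
    field_simp
  have : min (x / 2^k) ((2:ℝ)^(k+1)) ≤ Real.sqrt (2 * x) := by
    rw [Real.le_sqrt hmin (by positivity)]
    calc min (x / 2^k) ((2:ℝ)^(k+1)) ^ 2
        ≤ (x / 2 ^ k) * (2:ℝ) ^ (k + 1) := by
          rw [sq]
          exact mul_le_mul (min_le_left _ _) (min_le_right _ _) hmin h1
      _ = 2 * x := hprod
  rwa [Real.sqrt_mul (by norm_num) x] at this

lemma sqrt_le_Fmod {x : ℝ} (hx : 1 ≤ x) : Real.sqrt x ≤ Fmod x := by
  have hsx : 1 ≤ Real.sqrt x := by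
    rw [show (1:ℝ) = Real.sqrt 1 by simp]
    exact Real.sqrt_le_sqrt hx
  obtain ⟨k, hk1, hk2⟩ := exists_nat_pow_near hsx (by norm_num : (1:ℝ) < 2)
  refine le_trans (le_min ?_ hk2.le) (Fmod_term_le x k)
  have h2k : (0:ℝ) < 2 ^ k := by positivity
  rw [le_div_iff₀ h2k]
  calc Real.sqrt x * 2 ^ k ≤ Real.sqrt x * Real.sqrt x := by
        exact mul_le_mul_of_nonneg_left hk1 (Real.sqrt_nonneg x)
    _ = x := Real.mul_self_sqrt (by linarith)

lemma Fmod_pow_even (j : ℕ) : Fmod ((2:ℝ) ^ (2 * j)) = 2 ^ j := by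
  refine le_antisymm (Fmod_le _ fun k => ?_) ?_
  · rcases le_or_gt j k with h | h
    · refine le_trans (min_le_left _ _) ?_
      rw [div_le_iff₀ (by positivity), show (2:ℝ)^j * 2^k = 2^(j+k) by ring]
      exact pow_le_pow_right₀ (by norm_num) (by omega)
    · exact le_trans (min_le_right _ _) (pow_le_pow_right₀ (by norm_num) (by omega))
  · refine le_trans ?_ (Fmod_term_le _ j)
    have h1 : (2:ℝ) ^ (2*j) / 2 ^ j = 2 ^ j := by
      rw [two_mul, pow_add]
      field_simp
    rw [h1]
    exact le_min le_rfl (pow_le_pow_right₀ (by norm_num) (by omega))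

lemma Fmod_pow_odd (j : ℕ) : Fmod ((2:ℝ) ^ (2 * j + 1)) = 2 ^ (j + 1) := by
  refine le_antisymm (Fmod_le _ fun k => ?_) ?_
  · rcases le_or_gt (j + 1) k with h | h
    · refine le_trans (min_le_left _ _) ?_
      rw [div_le_iff₀ (by positivity), show (2:ℝ)^(j+1) * 2^k = 2^(j+1+k) by ring]
      exact pow_le_pow_right₀ (by norm_num) (by omega)
    · exact le_trans (min_le_right _ _) (pow_le_pow_right₀ (by norm_num) (by omega))
  · refine le_trans ?_ (Fmod_term_le _ j)
    have h1 : (2:ℝ) ^ (2*j+1) / 2 ^ j = 2 ^ (j+1) := by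
      rw [show 2*j+1 = (j+1)+j by omega, pow_add]
      field_simp
    rw [h1]
    exact le_min le_rfl le_rfl

lemma Fmod_isModulus_aux :
    (∀ x : ℝ, 0 ≤ x → 0 ≤ Fmod x) ∧
    (∀ x : ℝ, 0 ≤ x → (Fmod x = 0 ↔ x = 0)) ∧
    (∀ x y : ℝ, 0 ≤ x → 0 ≤ y → Fmod (x + y) ≤ Fmod x + Fmod y) ∧
    (∀ x y : ℝ, 0 ≤ x → x ≤ y → Fmod x ≤ Fmod y) ∧
    ContinuousWithinAt Fmod (Set.Ici 0) 0 ∧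
    Filter.Tendsto (fun n : ℕ => Fmod n) Filter.atTop Filter.atTop := by
  refine ⟨fun x hx => Fmod_nonneg hx, ?_, fun x y hx hy => Fmod_subadd hx hy,
    fun x y _ h => Fmod_mono h, ?_, ?_⟩
  · intro x hx
    constructor
    · intro h
      by_contra hne
      exact absurd h (ne_of_gt (Fmod_pos (lt_of_le_of_ne hx (Ne.symm hne))))
    · rintro rfl; exact Fmod_zero
  · unfold ContinuousWithinAt
    rw [Fmod_zero]
    refine squeeze_zero' ?_ ?_ (Filter.tendsto_id.mono_left nhdsWithin_le_nhds)
    · filter_upwards [self_mem_nhdsWithin] with x hx using Fmod_nonneg hx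
    · filter_upwards [self_mem_nhdsWithin] with x hx using Fmod_le_self hx
  · rw [Filter.tendsto_atTop]
    intro b
    filter_upwards [Filter.eventually_ge_atTop (max 1 ⌈b^2⌉₊)] with n hn
    have hn1 : (1:ℝ) ≤ (n:ℝ) := by
      exact_mod_cast le_trans (le_max_left _ _) hn
    have hnb : b^2 ≤ (n:ℝ) := by
      calc b^2 ≤ (⌈b^2⌉₊ : ℝ) := Nat.le_ceil _
        _ ≤ n := by exact_mod_cast le_trans (le_max_right _ _) hn
    have h1 : b ≤ Real.sqrt (n:ℝ) := by
      rcases le_or_gt b 0 with hb | hb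
      · exact le_trans hb (Real.sqrt_nonneg _)
      · rw [show b = Real.sqrt (b^2) from (Real.sqrt_sq hb.le).symm]
        exact Real.sqrt_le_sqrt hnb
    exact le_trans h1 (sqrt_le_Fmod hn1)

lemma alphaCount_le (A : Set ℕ) (n : ℕ) : alphaCount A n ≤ n := by
  unfold alphaCount
  have h := Set.ncard_le_ncard (Set.inter_subset_right (s := A) (t := Set.Icc 1 n))
    (Set.finite_Icc 1 n)
  have h2 : (Set.Icc 1 n).ncard = n := by
    rw [← Finset.coe_Icc, Set.ncard_coe_finset, Nat.card_Icc]; omega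
  omega

lemma Fmod_ideal_eq : fIdeal Fmod = statIdeal := by
  ext A
  simp only [fIdeal, statIdeal, Set.mem_setOf_eq]
  have hα0 : ∀ n : ℕ, (0:ℝ) ≤ (alphaCount A n : ℝ) := fun n => Nat.cast_nonneg _
  have hev1 : ∀ᶠ n : ℕ in Filter.atTop, (1:ℝ) ≤ (n:ℝ) := by
    filter_upwards [Filter.eventually_ge_atTop 1] with n hn
    exact_mod_cast hn
  constructor
  · intro h
    have hlim : Filter.Tendsto (fun n : ℕ => 2 * (Fmod (alphaCount A n : ℝ) / Fmod (n:ℝ))^2)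
        Filter.atTop (nhds 0) := by
      have h2 := (h.mul h).const_mul (2:ℝ)
      simpa [pow_two, mul_assoc] using h2
    refine squeeze_zero' ?_ ?_ hlim
    · exact Filter.Eventually.of_forall fun n => by positivity
    · filter_upwards [hev1] with n hn1
      set α : ℝ := (alphaCount A n : ℝ) with hα
      have hnpos : (0:ℝ) < n := by linarith
      have hFn : 0 < Fmod (n:ℝ) := Fmod_pos hnpos
      have hFα : 0 ≤ Fmod α := Fmod_nonneg (hα0 n)
      -- α / n ≤ 2 * (Fmod α / Fmod n)^2
      have hαF : α ≤ (Fmod α)^2 := by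
        rcases Nat.eq_zero_or_pos (alphaCount A n) with h0 | h1
        · simp [hα, h0, Fmod_zero]
        · have hα1 : (1:ℝ) ≤ α := by rw [hα]; exact_mod_cast h1
          have := sqrt_le_Fmod hα1
          nlinarith [Real.sq_sqrt (hα0 n), Real.sqrt_nonneg α]
      have hFn2 : (Fmod (n:ℝ))^2 ≤ 2 * n := by
        have h1 := Fmod_le_sqrt (le_of_lt hnpos)
        nlinarith [Real.sq_sqrt (le_of_lt hnpos), Real.sq_sqrt (by norm_num : (0:ℝ) ≤ 2),
          Real.sqrt_nonneg (n:ℝ), Real.sqrt_nonneg (2:ℝ), Fmod_nonneg (le_of_lt hnpos)]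
      rw [div_pow, ← mul_div_assoc, div_le_div_iff₀ hnpos (by positivity)]
      nlinarith [sq_nonneg (Fmod α), sq_nonneg (Fmod (n:ℝ))]
  · intro h
    have hlim : Filter.Tendsto
        (fun n : ℕ => Real.sqrt 2 * Real.sqrt ((alphaCount A n : ℝ) / (n:ℝ)))
        Filter.atTop (nhds 0) := by
      have h2 := ((Real.continuous_sqrt.tendsto 0).comp h).const_mul (Real.sqrt 2)
      simpa using h2
    refine squeeze_zero' ?_ ?_ hlim
    · filter_upwards [hev1] with n hn1
      exact div_nonneg (Fmod_nonneg (hα0 n)) (Fmod_nonneg (by linarith))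
    · filter_upwards [hev1] with n hn1
      set α : ℝ := (alphaCount A n : ℝ) with hα
      have hnpos : (0:ℝ) < n := by linarith
      rw [Real.sqrt_div (hα0 n), ← mul_div_assoc]
      exact div_le_div₀ (by positivity) (Fmod_le_sqrt (hα0 n))
        (Real.sqrt_pos.2 hnpos) (sqrt_le_Fmod hn1)


theorem exists_modulus_ratio_not_convergent_fIdeal_eq_statIdeal :
    ∃ f : ℝ → ℝ, IsModulus f ∧
      (∀ n : ℕ, Odd n → f (2 ^ n) / f (2 ^ (n + 1)) = 1) ∧
      (∀ n : ℕ, Even n → f (2 ^ n) / f (2 ^ (n + 1)) = 1 / 2) ∧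
      (¬ ∃ a : ℝ, Tendsto (fun n : ℕ => f n / f (2 * n)) atTop (nhds a)) ∧
      fIdeal f = statIdeal := by
  refine ⟨Fmod, Fmod_isModulus_aux, ?_, ?_, ?_, Fmod_ideal_eq⟩
  · intro n hn
    obtain ⟨j, hj⟩ := hn
    have h1 : n = 2 * j + 1 := by omega
    subst h1
    rw [show 2*j+1+1 = 2*(j+1) from by omega, Fmod_pow_odd, Fmod_pow_even]
    exact div_self (by positivity)
  · intro n hn
    obtain ⟨j, hj⟩ := hn
    have h1 : n = 2 * j := by omega
    subst h1
    rw [Fmod_pow_even, Fmod_pow_odd]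
    rw [pow_succ]
    rw [div_mul_eq_div_div, div_self (by positivity : (2:ℝ)^j ≠ 0)]
  · rintro ⟨a, ha⟩
    have hpow : Tendsto (fun m : ℕ => (2:ℕ) ^ m) atTop atTop :=
      tendsto_pow_atTop_atTop_of_one_lt one_lt_two
    have h2 : Tendsto (fun m : ℕ => Fmod ((2:ℝ) ^ m) / Fmod ((2:ℝ) ^ (m + 1))) atTop (nhds a) := by
      have := ha.comp hpow
      refine this.congr fun m => ?_
      simp only [Function.comp]
      push_cast
      rw [pow_succ]
      ring_nf
    have hodd : Tendsto (fun j : ℕ => 2 * j + 1) atTop atTop :=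
      Filter.tendsto_atTop_mono (fun j => by simp only [id]; omega) Filter.tendsto_id
    have heven : Tendsto (fun j : ℕ => 2 * j) atTop atTop :=
      Filter.tendsto_atTop_mono (fun j => by simp only [id]; omega) Filter.tendsto_id
    have ha1 : a = 1 := by
      have h3 := h2.comp hodd
      have h4 : Tendsto (fun _ : ℕ => (1:ℝ)) atTop (nhds a) := by
        refine h3.congr fun j => ?_
        simp only [Function.comp]
        rw [show 2*j+1+1 = 2*(j+1) by omega, Fmod_pow_odd, Fmod_pow_even]
        exact div_self (by positivity)
      exact tendsto_nhds_unique h4 tendsto_const_nhds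
    have ha2 : a = 1/2 := by
      have h3 := h2.comp heven
      have h4 : Tendsto (fun _ : ℕ => (1/2:ℝ)) atTop (nhds a) := by
        refine h3.congr fun j => ?_
        simp only [Function.comp]
        rw [Fmod_pow_even, show 2*j+1 = 2*j+1 from rfl, Fmod_pow_odd, pow_succ]
        rw [div_mul_eq_div_div, div_self (by positivity : (2:ℝ)^j ≠ 0)]
      exact tendsto_nhds_unique h4 tendsto_const_nhds
    rw [ha1] at ha2
    norm_num at ha2
end
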